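/- Let D be a Gauss diagram on the Wilson line, let e be the smallest endpoint of D and let z be the arrow of D having e as an endpoint. Let 1·D be the rotated diagram obtained from D by replacing the endpoint e of z by a real number larger than all endpoints of D, keeping its role as head or tail of z and keeping all signs and all other endpoints unchanged. Then two arrows of 1·D are linked if and only if the corresponding arrows of D are linked, I_{1·D}(y) = I_D(y) for every arrow y ≠ z, and I_{1·D}(z) = −I_D(z). In particular, if D has zero index then 1·D has zero index. -/

import Mathlib

noncomputable section

namespace Gauss

attribute [local instance] Classical.propDecidable

/-- An arrow of a Gauss diagram on the Wilson line: a tail point, a head point,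
and a sign. -/
structure Arrow where
  t : ℝ
  h : ℝ
  sgn : ℤ

/-- `p` lies strictly between `a` and `b`. -/
def Between (a b p : ℝ) : Prop := (a < p ∧ p < b) ∨ (b < p ∧ p < a)

/-- Two arrows are linked if they are distinct and exactly one of the two
endpoints of `y` lies strictly between the two endpoints of `x`. -/
def Linked (x y : Arrow) : Prop :=
  x ≠ y ∧ Xor' (Between x.t x.h y.t) (Between x.t x.h y.h)

/-- `delta x y = 1` if the head of `y` lies strictly between the endpoints of `x`,
and `-1` otherwise. -/
def delta (x y : Arrow) : ℤ := if Between x.t x.h y.h then 1 else -1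

/-- The index `I_D(x)` of an arrow `x` in the diagram `D`. -/
def index (D : Finset Arrow) (x : Arrow) : ℤ :=
  ∑ y ∈ D.filter (fun y => Linked x y), delta x y * x.sgn * y.sgn

/-- `p` is an endpoint of the diagram `D`. -/
def IsEndpoint (D : Finset Arrow) (p : ℝ) : Prop :=
  ∃ a ∈ D, p = a.t ∨ p = a.h

/-- A finite set of arrows is a Gauss diagram on the Wilson line if every sign
is `±1` and all endpoints are pairwise distinct. -/
def IsGaussDiagram (D : Finset Arrow) : Prop :=
  (∀ a ∈ D, a.sgn = 1 ∨ a.sgn = -1) ∧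
  (∀ a ∈ D, a.t ≠ a.h) ∧
  (∀ a ∈ D, ∀ b ∈ D, a ≠ b → a.t ≠ b.t ∧ a.t ≠ b.h ∧ a.h ≠ b.t ∧ a.h ≠ b.h)

/-- Two endpoints of `D` are adjacent if no endpoint of `D` lies strictly
between them. -/
def Adjacent (D : Finset Arrow) (p q : ℝ) : Prop :=
  p ≠ q ∧ IsEndpoint D p ∧ IsEndpoint D q ∧ ∀ r, IsEndpoint D r → ¬ Between p q r

/-- The degree of an arrow in the intersection graph of `D`: the number of
arrows linked with it. -/
def degree (D : Finset Arrow) (x : Arrow) : ℕ :=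
  (D.filter (fun y => Linked x y)).card

/-- A pair of arrows is heads-in if the head of each lies strictly between the
endpoints of the other. -/
def HeadsIn (x y : Arrow) : Prop :=
  Between x.t x.h y.h ∧ Between y.t y.h x.h

/-- A pair of arrows is heads-out if the head of neither lies strictly between
the endpoints of the other. -/
def HeadsOut (x y : Arrow) : Prop :=
  ¬ Between x.t x.h y.h ∧ ¬ Between y.t y.h x.h

/-- The order-two invariant counting heads-out linked pairs, weighted by signs.
Each unordered pair is counted once, via the ordering of the tails. -/
def v21 (D : Finset Arrow) : ℤ :=
  ∑ p ∈ (D ×ˢ D).filter (fun p => p.1.t < p.2.t ∧ Linked p.1 p.2 ∧ HeadsOut p.1 p.2),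
    p.1.sgn * p.2.sgn

/-- The order-two invariant counting heads-in linked pairs, weighted by signs.
Each unordered pair is counted once, via the ordering of the tails. -/
def v22 (D : Finset Arrow) : ℤ :=
  ∑ p ∈ (D ×ˢ D).filter (fun p => p.1.t < p.2.t ∧ Linked p.1 p.2 ∧ HeadsIn p.1 p.2),
    p.1.sgn * p.2.sgn

lemma between_comm (a b p : ℝ) : Between a b p ↔ Between b a p := or_comm

lemma not_between_lo {a b p : ℝ} (h1 : p ≤ a) (h2 : p ≤ b) : ¬ Between a b p := by
  rintro (⟨h3, h4⟩ | ⟨h3, h4⟩) <;> linarith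

lemma not_between_hi {a b p : ℝ} (h1 : a < p) (h2 : b < p) : ¬ Between a b p := by
  rintro (⟨h3, h4⟩ | ⟨h3, h4⟩) <;> linarith

lemma bet_flip {e o M p : ℝ} (heo : e < o) (hoM : o < M) (hep : e < p)
    (hpM : p < M) (hpo : p ≠ o) : Between e o p ↔ ¬ Between M o p := by
  constructor
  · rintro (⟨h1, h2⟩ | ⟨h1, h2⟩) (⟨h3, h4⟩ | ⟨h3, h4⟩) <;> linarith
  · intro hn
    left
    refine ⟨hep, ?_⟩
    rcases lt_or_gt_of_ne hpo with h | h
    · exact h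
    · exact absurd (Or.inr ⟨h, hpM⟩) hn

/-- The summand of the index, extended by `0` to unlinked arrows. -/
def gterm (x y : Arrow) : ℤ := if Linked x y then delta x y * x.sgn * y.sgn else 0

lemma index_eq_sum (S : Finset Arrow) (x : Arrow) :
    index S x = ∑ y ∈ S, gterm x y := by
  rw [index, Finset.sum_filter]
  rfl

lemma gterm_self (x : Arrow) : gterm x x = 0 := by
  simp [gterm, Linked]

/-- rotating the smallest endpoint of the diagram past the right
end (the action of `1 ∈ ℤ_{2n}`) preserves linkedness, preserves the index of
every arrow other than the rotated one, negates the index of the rotated arrow,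
and preserves the zero-index property. -/
theorem stmt5 (D : Finset Arrow) (hD : IsGaussDiagram D) (z : Arrow) (hz : z ∈ D)
    (e : ℝ) (he : e = z.t ∨ e = z.h) (hmin : ∀ r, IsEndpoint D r → e ≤ r)
    (M : ℝ) (hM : ∀ r, IsEndpoint D r → r < M) :
    let z' : Arrow := if e = z.t then ⟨M, z.h, z.sgn⟩ else ⟨z.t, M, z.sgn⟩
    let f : Arrow → Arrow := fun a => if a = z then z' else a
    let D' : Finset Arrow := insert z' (D.erase z)
    (∀ y ∈ D, ∀ w ∈ D, (Linked (f y) (f w) ↔ Linked y w)) ∧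
    (∀ y ∈ D, y ≠ z → index D' y = index D y) ∧
    index D' z' = -index D z ∧
    ((∀ x ∈ D, index D x = 0) → ∀ x ∈ D', index D' x = 0) := by
  intro z' f D'
  obtain ⟨hsgn, hth, hdist⟩ := hD
  have hzth : z.t ≠ z.h := hth z hz
  have hwM : ∀ w ∈ D, w.t < M ∧ w.h < M := fun w hw =>
    ⟨hM _ ⟨w, hw, Or.inl rfl⟩, hM _ ⟨w, hw, Or.inr rfl⟩⟩
  have hew : ∀ w ∈ D, e ≤ w.t ∧ e ≤ w.h := fun w hw =>
    ⟨hmin _ ⟨w, hw, Or.inl rfl⟩, hmin _ ⟨w, hw, Or.inr rfl⟩⟩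
  have hlt : ∀ p, IsEndpoint D p → p ≠ e → e < p := fun p hp hpe =>
    lt_of_le_of_ne (hmin p hp) (Ne.symm hpe)
  have hzsgn' : z'.sgn = z.sgn := by
    simp only [z']
    split <;> rfl
  have hz'M : z'.t = M ∨ z'.h = M := by
    simp only [z']
    split
    · exact Or.inl rfl
    · exact Or.inr rfl
  have hne_z' : ∀ w ∈ D, w ≠ z' := by
    intro w hw hww
    have h1 := (hwM w hw).1
    have h2 := (hwM w hw).2
    rw [hww] at h1 h2
    rcases hz'M with h | h <;> linarith
  have hz'notD : z' ∉ D := fun h => hne_z' z' h rfl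
  have hz'notE : z' ∉ D.erase z := fun h => hz'notD (Finset.mem_of_mem_erase h)
  -- the key geometric fact: for an endpoint `p` of an arrow other than `z`,
  -- being between the endpoints of `z` is equivalent to NOT being between the
  -- endpoints of `z'`.
  have flip : ∀ p, IsEndpoint D p → p ≠ z.t → p ≠ z.h →
      (Between z.t z.h p ↔ ¬ Between z'.t z'.h p) := by
    intro p hp hpt hph
    have hpe : p ≠ e := by rcases he with hc | hc <;> rw [hc] <;> assumption
    have hep : e < p := hlt p hp hpe
    have hpM : p < M := hM p hp
    rcases he with hc | hc
    · have hz't : z'.t = M := by simp only [z']; rw [if_pos hc]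
      have hz'h : z'.h = z.h := by simp only [z']; rw [if_pos hc]
      have heo : e < z.h := hlt z.h ⟨z, hz, Or.inr rfl⟩ (by rw [hc]; exact Ne.symm hzth)
      have hoM : z.h < M := hM _ ⟨z, hz, Or.inr rfl⟩
      rw [hz't, hz'h, ← hc]
      exact bet_flip heo hoM hep hpM hph
    · have hz't : z'.t = z.t := by
        simp only [z']; rw [if_neg (fun h => hzth (h.symm.trans hc))]
      have hz'h : z'.h = M := by
        simp only [z']; rw [if_neg (fun h => hzth (h.symm.trans hc))]
      have heo : e < z.t := hlt z.t ⟨z, hz, Or.inl rfl⟩ (by rw [hc]; exact hzth)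
      have hoM : z.t < M := hM _ ⟨z, hz, Or.inl rfl⟩
      rw [hz't, hz'h, ← hc, between_comm z.t e, between_comm z.t M]
      exact bet_flip heo hoM hep hpM hpt
  -- linkedness with `z'` as first argument
  have key2 : ∀ w ∈ D, w ≠ z → (Linked z' w ↔ Linked z w) := by
    intro w hw hwz
    obtain ⟨d1, d2, d3, d4⟩ := hdist w hw z hz hwz
    have A := flip w.t ⟨w, hw, Or.inl rfl⟩ d1 d2
    have B := flip w.h ⟨w, hw, Or.inr rfl⟩ d3 d4
    have hxor : Xor' (Between z'.t z'.h w.t) (Between z'.t z'.h w.h) ↔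
        Xor' (Between z.t z.h w.t) (Between z.t z.h w.h) := by
      unfold Xor'
      constructor
      · rintro (⟨h1, h2⟩ | ⟨h1, h2⟩)
        · exact Or.inr ⟨B.mpr h2, fun h => A.mp h h1⟩
        · exact Or.inl ⟨A.mpr h2, fun h => B.mp h h1⟩
      · rintro (⟨h1, h2⟩ | ⟨h1, h2⟩)
        · exact Or.inr ⟨Classical.byContradiction (fun h => h2 (B.mpr h)), A.mp h1⟩
        · exact Or.inl ⟨Classical.byContradiction (fun h => h2 (A.mpr h)), B.mp h1⟩
    constructor
    · rintro ⟨-, hx⟩; exact ⟨fun h => hwz h.symm, hxor.mp hx⟩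
    · rintro ⟨-, hx⟩; exact ⟨fun h => hne_z' w hw h.symm, hxor.mpr hx⟩
  -- linkedness with `z'` as second argument
  have key1 : ∀ w ∈ D, w ≠ z → (Linked w z' ↔ Linked w z) := by
    intro w hw hwz
    have hwt := (hwM w hw).1
    have hwh := (hwM w hw).2
    have het := (hew w hw).1
    have heh := (hew w hw).2
    have hFM : ∀ q : ℝ, q = M → ¬ Between w.t w.h q := by
      rintro q rfl; exact not_between_hi hwt hwh
    have hFe : ∀ q : ℝ, q = e → ¬ Between w.t w.h q := by
      rintro q rfl; exact not_between_lo het heh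
    rcases he with hc | hc
    · have hz't : z'.t = M := by simp only [z']; rw [if_pos hc]
      have hz'h : z'.h = z.h := by simp only [z']; rw [if_pos hc]
      have F1 : ¬ Between w.t w.h z'.t := hFM _ hz't
      have F2 : ¬ Between w.t w.h z.t := hFe _ hc.symm
      constructor
      · rintro ⟨-, hx⟩
        refine ⟨hwz, ?_⟩
        rw [hz'h] at hx
        unfold Xor' Xor at hx ⊢
        tauto
      · rintro ⟨-, hx⟩
        refine ⟨hne_z' w hw, ?_⟩
        rw [hz'h]
        unfold Xor' Xor at hx ⊢
        tauto
    · have hz't : z'.t = z.t := by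
        simp only [z']; rw [if_neg (fun h => hzth (h.symm.trans hc))]
      have hz'h : z'.h = M := by
        simp only [z']; rw [if_neg (fun h => hzth (h.symm.trans hc))]
      have F1 : ¬ Between w.t w.h z'.h := hFM _ hz'h
      have F2 : ¬ Between w.t w.h z.h := hFe _ hc.symm
      constructor
      · rintro ⟨-, hx⟩
        refine ⟨hwz, ?_⟩
        rw [hz't] at hx
        unfold Xor' Xor at hx ⊢
        tauto
      · rintro ⟨-, hx⟩
        refine ⟨hne_z' w hw, ?_⟩
        rw [hz't]
        unfold Xor' Xor at hx ⊢
        tauto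
  -- delta with `z'` as first argument is negated
  have keyd : ∀ w ∈ D, w ≠ z → delta z' w = -delta z w := by
    intro w hw hwz
    obtain ⟨d1, d2, d3, d4⟩ := hdist w hw z hz hwz
    have B := flip w.h ⟨w, hw, Or.inr rfl⟩ d3 d4
    by_cases hb : Between z'.t z'.h w.h
    · have hnb : ¬ Between z.t z.h w.h := fun h => (B.mp h) hb
      simp [delta, hb, hnb]
    · have hbz : Between z.t z.h w.h := B.mpr hb
      simp [delta, hb, hbz]
  -- delta with `z'` as second argument is unchanged
  have keyd2 : ∀ w ∈ D, w ≠ z → delta w z' = delta w z := by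
    intro w hw hwz
    have hwt := (hwM w hw).1
    have hwh := (hwM w hw).2
    have het := (hew w hw).1
    have heh := (hew w hw).2
    rcases he with hc | hc
    · have hz'h : z'.h = z.h := by simp only [z']; rw [if_pos hc]
      simp [delta, hz'h]
    · have hz'h : z'.h = M := by
        simp only [z']; rw [if_neg (fun h => hzth (h.symm.trans hc))]
      have F1 : ¬ Between w.t w.h z.h := by rw [← hc]; exact not_between_lo het heh
      have F2 : ¬ Between w.t w.h z'.h := by rw [hz'h]; exact not_between_hi hwt hwh
      simp [delta, F1, F2]
  -- `gterm` comparisons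
  have hg2 : ∀ y ∈ D, y ≠ z → gterm y z' = gterm y z := by
    intro y hy hyz
    by_cases hL : Linked y z
    · rw [gterm, gterm, if_pos ((key1 y hy hyz).mpr hL), if_pos hL, keyd2 y hy hyz, hzsgn']
    · rw [gterm, gterm, if_neg (fun h => hL ((key1 y hy hyz).mp h)), if_neg hL]
  have hg1 : ∀ w ∈ D, w ≠ z → gterm z' w = -gterm z w := by
    intro w hw hwz
    by_cases hL : Linked z w
    · rw [gterm, gterm, if_pos ((key2 w hw hwz).mpr hL), if_pos hL, keyd w hw hwz, hzsgn']
      ring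
    · rw [gterm, gterm, if_neg (fun h => hL ((key2 w hw hwz).mp h)), if_neg hL, neg_zero]
  have hsum_erase : ∀ x : Arrow, ∑ w ∈ D.erase z, gterm x w + gterm x z = ∑ w ∈ D, gterm x w :=
    fun x => Finset.sum_erase_add D (gterm x) hz
  have hindexD' : ∀ x : Arrow, index D' x = gterm x z' + ∑ w ∈ D.erase z, gterm x w := by
    intro x
    rw [index_eq_sum]
    exact Finset.sum_insert hz'notE
  -- part 2 : index preserved for arrows other than z
  have part2 : ∀ y ∈ D, y ≠ z → index D' y = index D y := by
    intro y hy hyz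
    rw [hindexD' y, hg2 y hy hyz, index_eq_sum, ← hsum_erase y]
    ring
  -- part 3 : index of z' is negated
  have part3 : index D' z' = -index D z := by
    rw [hindexD' z', gterm_self, zero_add, index_eq_sum, ← hsum_erase z, gterm_self, add_zero,
      ← Finset.sum_neg_distrib]
    refine Finset.sum_congr rfl ?_
    intro w hw
    exact hg1 w (Finset.mem_of_mem_erase hw) (Finset.ne_of_mem_erase hw)
  refine ⟨?_, part2, part3, ?_⟩
  · intro y hy w hw
    by_cases hyz : y = z <;> by_cases hwz : w = z
    · subst hyz; subst hwz
      simp only [f, if_pos rfl]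
      constructor <;> rintro ⟨h, -⟩ <;> exact absurd rfl h
    · subst hyz
      simp only [f, if_pos rfl, if_neg hwz]
      exact key2 w hw hwz
    · subst hwz
      simp only [f, if_pos rfl, if_neg hyz]
      exact key1 y hy hyz
    · simp only [f, if_neg hyz, if_neg hwz]
  · intro h0 x hx
    rcases Finset.mem_insert.mp hx with rfl | hx'
    · rw [part3, h0 z hz, neg_zero]
    · rw [part2 x (Finset.mem_of_mem_erase hx') (Finset.ne_of_mem_erase hx')]
      exact h0 x (Finset.mem_of_mem_erase hx')

end Gauss
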